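/- Let n ≥ 1, let f₁, …, f_{2n} ∈ {1, −1}, and let d ∈ ℂ with d ≠ 0. In M₂(ℂ[u]) set h_j = G₁^{f₁} G₂^{f₂} ⋯ G₁^{f_{2j−1}} G₂^{f_{2j}} for 1 ≤ j ≤ n. Then for each j there exist s_j ∈ {1, −1} and complex numbers A_j, B_j such that, writing deg for degree in u: s_j·(h_j)₁₁ − (u^j + A_j u^{j−1}) has degree ≤ j−2; s_j·(h_j)₁₂ + f_{2j} d^{−f_{2j}} u^{j−1} has degree ≤ j−2; s_j·(h_j)₂₁ − f₁ d^{−f₁}(u^j + B_j u^{j−1}) has degree ≤ j−2; s_j·(h_j)₂₂ + f₁ f_{2j} d^{−f₁−f_{2j}} u^{j−1} has degree ≤ j−2. Moreover the difference A_j − B_j does not depend on j, i.e. A_j − B_j = A₁ − B₁ for all 1 ≤ j ≤ n. -/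

import Mathlib

open Matrix Polynomial

/-- `G₁ = [[d, 1], [0, d⁻¹]]` over `ℂ[u]`. -/
noncomputable def G1 (d : ℂ) : Matrix (Fin 2) (Fin 2) (Polynomial ℂ) :=
  !![C d, 1; 0, C d⁻¹]

/-- `G₂ = [[d, 0], [−u, d⁻¹]]` over `ℂ[u]`. -/
noncomputable def G2 (d : ℂ) : Matrix (Fin 2) (Fin 2) (Polynomial ℂ) :=
  !![C d, 0; -X, C d⁻¹]

/-- `h_j = G₁^{f₁} G₂^{f₂} ⋯ G₁^{f_{2j−1}} G₂^{f_{2j}}`. -/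
noncomputable def hWord (f : ℕ → ℤ) (d : ℂ) (j : ℕ) :
    Matrix (Fin 2) (Fin 2) (Polynomial ℂ) :=
  ((List.range (2 * j)).map
    (fun i => (if (i + 1) % 2 = 1 then G1 d else G2 d) ^ f (i + 1))).prod


lemma fin2_matrix_ext {a b c e a' b' c' e' : Polynomial ℂ} (h1 : a = a') (h2 : b = b')
    (h3 : c = c') (h4 : e = e') : !![a, b; c, e] = !![a', b'; c', e'] := by
  rw [h1, h2, h3, h4]

lemma G1_zpow {d : ℂ} (hd : d ≠ 0) {e : ℤ} (he : e = 1 ∨ e = -1) :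
    (G1 d) ^ e = !![C (d ^ e), C ((e : ℂ)); 0, C (d ^ (-e))] := by
  rcases he with rfl | rfl
  · norm_num [G1]
  · rw [Matrix.zpow_neg_one, Matrix.inv_eq_right_inv]
    rw [G1, Matrix.mul_fin_two, Matrix.one_fin_two]
    refine fin2_matrix_ext ?_ ?_ ?_ ?_ <;>
      simp [← C_mul, mul_inv_cancel₀ hd, inv_mul_cancel₀ hd] <;> ring_nf <;>
      simp [← C_mul, mul_inv_cancel₀ hd, inv_mul_cancel₀ hd]

lemma G2_zpow {d : ℂ} (hd : d ≠ 0) {e : ℤ} (he : e = 1 ∨ e = -1) :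
    (G2 d) ^ e = !![C (d ^ e), 0; -(C ((e : ℂ)) * X), C (d ^ (-e))] := by
  rcases he with rfl | rfl
  · norm_num [G2]
  · rw [Matrix.zpow_neg_one, Matrix.inv_eq_right_inv]
    rw [G2, Matrix.mul_fin_two, Matrix.one_fin_two]
    refine fin2_matrix_ext ?_ ?_ ?_ ?_ <;>
      simp [← C_mul, mul_inv_cancel₀ hd, inv_mul_cancel₀ hd] <;> ring_nf <;>
      simp [← C_mul, mul_inv_cancel₀ hd, inv_mul_cancel₀ hd]

lemma blockM {d : ℂ} (hd : d ≠ 0) {e n : ℤ} (he : e = 1 ∨ e = -1) (hn : n = 1 ∨ n = -1) :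
    (G1 d) ^ e * (G2 d) ^ n =
      !![C (d ^ e * d ^ n) - C ((e : ℂ) * (n : ℂ)) * X, C ((e : ℂ) * d ^ (-n));
         -(C ((n : ℂ) * d ^ (-e)) * X), C (d ^ (-e) * d ^ (-n))] := by
  rw [G1_zpow hd he, G2_zpow hd hn, Matrix.mul_fin_two]
  refine fin2_matrix_ext ?_ ?_ ?_ ?_ <;> simp only [C_mul] <;> ring

lemma hWord_succ (f : ℕ → ℤ) (d : ℂ) (j : ℕ) :
    hWord f d (j + 1) = hWord f d j * ((G1 d) ^ f (2 * j + 1) * (G2 d) ^ f (2 * j + 2)) := by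
  have h2 : 2 * (j + 1) = (2 * j + 1) + 1 := by ring
  rw [hWord, h2, List.range_succ, List.range_succ]
  simp only [List.map_append, List.prod_append, List.map_cons, List.map_nil, List.prod_cons,
    List.prod_nil, mul_one]
  rw [if_pos (show (2 * j + 1) % 2 = 1 by omega),
    if_neg (show ¬((2 * j + 1 + 1) % 2 = 1) by omega)]
  rw [show 2 * j + 1 + 1 = 2 * j + 2 from rfl, hWord, mul_assoc]

lemma hWord_zero (f : ℕ → ℤ) (d : ℂ) : hWord f d 0 = 1 := by simp [hWord]

lemma degC_mul_le (a : ℂ) (p : Polynomial ℂ) : (C a * p).degree ≤ p.degree := by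
  calc (C a * p).degree ≤ (C a).degree + p.degree := degree_mul_le _ _
    _ ≤ 0 + p.degree := add_le_add degree_C_le le_rfl
    _ = p.degree := by rw [zero_add]

lemma deg_mul_lin {p L : Polynomial ℂ} {j : ℕ} (hj : 1 ≤ j)
    (hp : p.degree < ((j - 1 : ℕ) : WithBot ℕ)) (hL : L.degree ≤ 1) :
    (p * L).degree < ((j : ℕ) : WithBot ℕ) := by
  obtain ⟨k, rfl⟩ : ∃ k, j = k + 1 := ⟨j - 1, by omega⟩
  simp only [Nat.add_sub_cancel] at hp
  calc (p * L).degree ≤ p.degree + L.degree := degree_mul_le _ _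
    _ < ((k : ℕ) : WithBot ℕ) + 1 :=
        by
          rcases eq_or_ne L 0 with hL0 | hL0
          · simp [hL0]
          · exact WithBot.add_lt_add_of_lt_of_le (by simpa using hL0) hp hL
    _ = (((k + 1 : ℕ)) : WithBot ℕ) := by push_cast; rfl

lemma deg_mul_C_lt {p : Polynomial ℂ} {j : ℕ} (hj : 1 ≤ j)
    (hp : p.degree < ((j - 1 : ℕ) : WithBot ℕ)) (a : ℂ) :
    (p * C a).degree < ((j : ℕ) : WithBot ℕ) := by
  calc (p * C a).degree = (C a * p).degree := by rw [mul_comm]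
    _ ≤ p.degree := degC_mul_le _ _
    _ < ((j - 1 : ℕ) : WithBot ℕ) := hp
    _ ≤ ((j : ℕ) : WithBot ℕ) := by exact_mod_cast (by omega : j - 1 ≤ j)

lemma deg_CXpow_lt {j : ℕ} (hj : 1 ≤ j) (a : ℂ) :
    (C a * X ^ (j - 1)).degree < ((j : ℕ) : WithBot ℕ) :=
  lt_of_le_of_lt (degree_C_mul_X_pow_le _ _) (Nat.cast_lt.mpr (by omega))

lemma row_step {j : ℕ} (hj : 1 ≤ j) {e n : ℂ} (he : e = 1 ∨ e = -1) (hn : n = 1 ∨ n = -1)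
    (z x wy b₀ γ A : ℂ) (P Q : Polynomial ℂ)
    (hP : (P - C γ * (X ^ j + C A * X ^ (j - 1))).degree < ((j - 1 : ℕ) : WithBot ℕ))
    (hQ : (Q + C (γ * b₀) * X ^ (j - 1)).degree < ((j - 1 : ℕ) : WithBot ℕ)) :
    ((C (-(e * n)) * (P * (C wy - C (e * n) * X) + Q * (-(C (n * x) * X)))
        - C γ * (X ^ (j + 1) + C (A - e * n * wy - e * b₀ * x) * X ^ j)).degree
        < ((j : ℕ) : WithBot ℕ)) ∧
    ((C (-(e * n)) * (P * C (e * z) + Q * C (x * z)) + C (γ * (n * z)) * X ^ j).degree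
        < ((j : ℕ) : WithBot ℕ)) := by
  obtain ⟨p, hp, rfl⟩ : ∃ p, p.degree < ((j - 1 : ℕ) : WithBot ℕ) ∧
      P = C γ * (X ^ j + C A * X ^ (j - 1)) + p := ⟨_, hP, by ring⟩
  obtain ⟨q, hq, rfl⟩ : ∃ q, q.degree < ((j - 1 : ℕ) : WithBot ℕ) ∧
      Q = -(C (γ * b₀) * X ^ (j - 1)) + q := ⟨_, hQ, by ring⟩
  obtain ⟨k, rfl⟩ : ∃ k, j = k + 1 := ⟨j - 1, by omega⟩
  simp only [Nat.add_sub_cancel] at hp hq ⊢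
  constructor
  · have hid : (C (-(e * n)) * ((C γ * (X ^ (k + 1) + C A * X ^ k) + p) * (C wy - C (e * n) * X)
        + (-(C (γ * b₀) * X ^ k) + q) * (-(C (n * x) * X)))
        - C γ * (X ^ (k + 1 + 1) + C (A - e * n * wy - e * b₀ * x) * X ^ (k + 1)))
        = p * (C (-(e * n)) * (C wy - C (e * n) * X))
          + q * (C (-(e * n)) * (-(C (n * x) * X)))
          + C (-(e * n * wy * γ * A)) * X ^ k := by
      rcases he with rfl | rfl <;> rcases hn with rfl | rfl <;> simp only [C_mul, C_neg, C_sub,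
        C_1, _root_.map_one, map_neg] <;> ring
    rw [hid]
    have hL1 : (C (-(e * n)) * (C wy - C (e * n) * X)).degree ≤ 1 := by
      refine le_trans (degC_mul_le _ _) (le_trans (degree_sub_le _ _) (max_le ?_ ?_))
      · exact le_trans degree_C_le (by norm_num)
      · exact degree_C_mul_X_le _
    have hL2 : (C (-(e * n)) * (-(C (n * x) * X))).degree ≤ 1 := by
      refine le_trans (degC_mul_le _ _) ?_
      rw [degree_neg]; exact degree_C_mul_X_le _
    refine lt_of_le_of_lt (degree_add_le _ _) (max_lt (lt_of_le_of_lt (degree_add_le _ _)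
      (max_lt ?_ ?_)) ?_)
    · exact deg_mul_lin (by omega) (by simpa using hp) hL1
    · exact deg_mul_lin (by omega) (by simpa using hq) hL2
    · have := deg_CXpow_lt (j := k + 1) (by omega) (-(e * n * wy * γ * A))
      rwa [Nat.add_sub_cancel] at this
  · have hid : (C (-(e * n)) * ((C γ * (X ^ (k + 1) + C A * X ^ k) + p) * C (e * z)
        + (-(C (γ * b₀) * X ^ k) + q) * C (x * z)) + C (γ * (n * z)) * X ^ (k + 1))
        = p * C (-(e * n) * (e * z)) + q * C (-(e * n) * (x * z))
          + C (-(e * n) * (γ * A * (e * z) - γ * b₀ * (x * z))) * X ^ k := by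
      rcases he with rfl | rfl <;> rcases hn with rfl | rfl <;> simp only [C_mul, C_neg, C_sub,
        C_1, _root_.map_one, map_neg] <;> ring
    rw [hid]
    refine lt_of_le_of_lt (degree_add_le _ _) (max_lt (lt_of_le_of_lt (degree_add_le _ _)
      (max_lt ?_ ?_)) ?_)
    · exact deg_mul_C_lt (by omega) (by simpa using hp) _
    · exact deg_mul_C_lt (by omega) (by simpa using hq) _
    · have := deg_CXpow_lt (j := k + 1) (by omega) (-(e * n) * (γ * A * (e * z) - γ * b₀ * (x * z)))
      rwa [Nat.add_sub_cancel] at this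

lemma zsmul_poly (s : ℤ) (P : Polynomial ℂ) : s • P = C ((s : ℂ)) * P := by
  rw [zsmul_eq_mul, ← Polynomial.C_eq_intCast]

lemma entry00 (a b c e : Polynomial ℂ) : !![a, b; c, e] 0 0 = a := by simp
lemma entry01 (a b c e : Polynomial ℂ) : !![a, b; c, e] 0 1 = b := by simp
lemma entry10 (a b c e : Polynomial ℂ) : !![a, b; c, e] 1 0 = c := by simp
lemma entry11 (a b c e : Polynomial ℂ) : !![a, b; c, e] 1 1 = e := by simp

lemma mul_entry (H M : Matrix (Fin 2) (Fin 2) (Polynomial ℂ)) (i k : Fin 2) :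
    (H * M) i k = H i 0 * M 0 k + H i 1 * M 1 k := by
  rw [Matrix.mul_apply, Fin.sum_univ_two]

lemma base_case {d : ℂ} (hd : d ≠ 0) {f : ℕ → ℤ} (hf1 : f 1 = 1 ∨ f 1 = -1)
    (hf2 : f 2 = 1 ∨ f 2 = -1) :
    ((-(f 1 * f 2) : ℤ) • hWord f d 1 0 0
        - (X ^ 1 + C (-((f 1 : ℂ) * (f 2 : ℂ)) * (d ^ (f 1) * d ^ (f 2))) * X ^ (1 - 1))).degree
      < ((1 - 1 : ℕ) : WithBot ℕ) ∧
    ((-(f 1 * f 2) : ℤ) • hWord f d 1 0 1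
        + C ((f (2 * 1) : ℂ) * d ^ (-f (2 * 1))) * X ^ (1 - 1)).degree
      < ((1 - 1 : ℕ) : WithBot ℕ) ∧
    ((-(f 1 * f 2) : ℤ) • hWord f d 1 1 0
        - C ((f 1 : ℂ) * d ^ (-f 1)) * (X ^ 1 + C (0 : ℂ) * X ^ (1 - 1))).degree
      < ((1 - 1 : ℕ) : WithBot ℕ) ∧
    ((-(f 1 * f 2) : ℤ) • hWord f d 1 1 1
        + C ((f 1 : ℂ) * (f (2 * 1) : ℂ) * d ^ (-f 1 - f (2 * 1))) * X ^ (1 - 1)).degree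
      < ((1 - 1 : ℕ) : WithBot ℕ) := by
  have hW : hWord f d 1 =
      !![C (d ^ (f 1) * d ^ (f 2)) - C ((f 1 : ℂ) * (f 2 : ℂ)) * X, C ((f 1 : ℂ) * d ^ (-f 2));
         -(C ((f 2 : ℂ) * d ^ (-f 1)) * X), C (d ^ (-f 1) * d ^ (-f 2))] := by
    have h := hWord_succ f d 0
    rw [hWord_zero, one_mul] at h
    norm_num at h
    rw [h, blockM hd hf1 hf2]
  have h21 : (2 * 1 : ℕ) = 2 := by norm_num
  have hsp : d ^ (-f 1 - f 2) = d ^ (-f 1) * d ^ (-f 2) := by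
    rw [sub_eq_add_neg, zpow_add₀ hd]
  refine ⟨?_, ?_, ?_, ?_⟩
  · have hz : ((-(f 1 * f 2) : ℤ) • hWord f d 1 0 0
        - (X ^ 1 + C (-((f 1 : ℂ) * (f 2 : ℂ)) * (d ^ (f 1) * d ^ (f 2))) * X ^ (1 - 1))) = 0 := by
      rw [hW, entry00, zsmul_poly]
      rcases hf1 with h1 | h1 <;> rcases hf2 with h2 | h2 <;> rw [h1, h2] <;>
        simp only [Int.cast_one, Int.cast_neg, Int.cast_mul, C_mul, C_neg, C_1, pow_zero,
          pow_one, mul_one, one_mul, neg_neg, Int.reduceNeg, Int.reduceMul] <;> ring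
    rw [hz, degree_zero]
    exact WithBot.bot_lt_coe _
  · have hz : ((-(f 1 * f 2) : ℤ) • hWord f d 1 0 1
        + C ((f (2 * 1) : ℂ) * d ^ (-f (2 * 1))) * X ^ (1 - 1)) = 0 := by
      rw [h21, hW, entry01, zsmul_poly]
      rcases hf1 with h1 | h1 <;> rcases hf2 with h2 | h2 <;> rw [h1, h2] <;>
        simp only [Int.cast_one, Int.cast_neg, Int.cast_mul, C_mul, C_neg, C_1, pow_zero,
          pow_one, mul_one, one_mul, neg_neg, Int.reduceNeg, Int.reduceMul] <;> ring
    rw [hz, degree_zero]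
    exact WithBot.bot_lt_coe _
  · have hz : ((-(f 1 * f 2) : ℤ) • hWord f d 1 1 0
        - C ((f 1 : ℂ) * d ^ (-f 1)) * (X ^ 1 + C (0 : ℂ) * X ^ (1 - 1))) = 0 := by
      rw [hW, entry10, zsmul_poly]
      rcases hf1 with h1 | h1 <;> rcases hf2 with h2 | h2 <;> rw [h1, h2] <;>
        simp only [Int.cast_one, Int.cast_neg, Int.cast_mul, C_mul, C_neg, C_1, C_0, pow_zero,
          pow_one, mul_one, one_mul, neg_neg, Int.reduceNeg, Int.reduceMul] <;> ring
    rw [hz, degree_zero]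
    exact WithBot.bot_lt_coe _
  · have hz : ((-(f 1 * f 2) : ℤ) • hWord f d 1 1 1
        + C ((f 1 : ℂ) * (f (2 * 1) : ℂ) * d ^ (-f 1 - f (2 * 1))) * X ^ (1 - 1)) = 0 := by
      rw [h21, hW, entry11, zsmul_poly, hsp]
      rcases hf1 with h1 | h1 <;> rcases hf2 with h2 | h2 <;> rw [h1, h2] <;>
        simp only [Int.cast_one, Int.cast_neg, Int.cast_mul, C_mul, C_neg, C_1, pow_zero,
          pow_one, mul_one, one_mul, neg_neg, Int.reduceNeg, Int.reduceMul] <;> ring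
    rw [hz, degree_zero]
    exact WithBot.bot_lt_coe _
lemma step_case {d : ℂ} (hd : d ≠ 0) {f : ℕ → ℤ} {j : ℕ} (hj : 1 ≤ j)
    (hε : f (2 * j + 1) = 1 ∨ f (2 * j + 1) = -1)
    (hη : f (2 * j + 2) = 1 ∨ f (2 * j + 2) = -1)
    {s : ℤ} {A B : ℂ}
    (h00 : (s • hWord f d j 0 0 - (X ^ j + C A * X ^ (j - 1))).degree
      < ((j - 1 : ℕ) : WithBot ℕ))
    (h01 : (s • hWord f d j 0 1
        + C ((f (2 * j) : ℂ) * d ^ (-f (2 * j))) * X ^ (j - 1)).degree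
      < ((j - 1 : ℕ) : WithBot ℕ))
    (h10 : (s • hWord f d j 1 0
        - C ((f 1 : ℂ) * d ^ (-f 1)) * (X ^ j + C B * X ^ (j - 1))).degree
      < ((j - 1 : ℕ) : WithBot ℕ))
    (h11 : (s • hWord f d j 1 1
        + C ((f 1 : ℂ) * (f (2 * j) : ℂ) * d ^ (-f 1 - f (2 * j))) * X ^ (j - 1)).degree
      < ((j - 1 : ℕ) : WithBot ℕ)) :
    ((s * (-(f (2 * j + 1) * f (2 * j + 2)))) • hWord f d (j + 1) 0 0
        - (X ^ (j + 1) + C (A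
            - (f (2 * j + 1) : ℂ) * (f (2 * j + 2) : ℂ)
                * (d ^ (f (2 * j + 1)) * d ^ (f (2 * j + 2)))
            - (f (2 * j + 1) : ℂ) * ((f (2 * j) : ℂ) * d ^ (-f (2 * j)))
                * d ^ (-f (2 * j + 1))) * X ^ (j + 1 - 1))).degree
      < ((j + 1 - 1 : ℕ) : WithBot ℕ) ∧
    ((s * (-(f (2 * j + 1) * f (2 * j + 2)))) • hWord f d (j + 1) 0 1
        + C ((f (2 * (j + 1)) : ℂ) * d ^ (-f (2 * (j + 1)))) * X ^ (j + 1 - 1)).degree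
      < ((j + 1 - 1 : ℕ) : WithBot ℕ) ∧
    ((s * (-(f (2 * j + 1) * f (2 * j + 2)))) • hWord f d (j + 1) 1 0
        - C ((f 1 : ℂ) * d ^ (-f 1)) * (X ^ (j + 1) + C (B
            - (f (2 * j + 1) : ℂ) * (f (2 * j + 2) : ℂ)
                * (d ^ (f (2 * j + 1)) * d ^ (f (2 * j + 2)))
            - (f (2 * j + 1) : ℂ) * ((f (2 * j) : ℂ) * d ^ (-f (2 * j)))
                * d ^ (-f (2 * j + 1))) * X ^ (j + 1 - 1))).degree
      < ((j + 1 - 1 : ℕ) : WithBot ℕ) ∧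
    ((s * (-(f (2 * j + 1) * f (2 * j + 2)))) • hWord f d (j + 1) 1 1
        + C ((f 1 : ℂ) * (f (2 * (j + 1)) : ℂ) * d ^ (-f 1 - f (2 * (j + 1)))) * X ^ (j + 1 - 1)).degree
      < ((j + 1 - 1 : ℕ) : WithBot ℕ) := by
  have he : (f (2 * j + 1) : ℂ) = 1 ∨ (f (2 * j + 1) : ℂ) = -1 := by
    rcases hε with h | h <;> rw [h] <;> norm_num
  have hnn : (f (2 * j + 2) : ℂ) = 1 ∨ (f (2 * j + 2) : ℂ) = -1 := by
    rcases hη with h | h <;> rw [h] <;> norm_num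
  have hM : hWord f d (j + 1) = hWord f d j *
      !![C (d ^ (f (2 * j + 1)) * d ^ (f (2 * j + 2)))
            - C ((f (2 * j + 1) : ℂ) * (f (2 * j + 2) : ℂ)) * X,
         C ((f (2 * j + 1) : ℂ) * d ^ (-f (2 * j + 2)));
         -(C ((f (2 * j + 2) : ℂ) * d ^ (-f (2 * j + 1))) * X),
         C (d ^ (-f (2 * j + 1)) * d ^ (-f (2 * j + 2)))] := by
    rw [hWord_succ, blockM hd hε hη]
  have hs' : ((s * (-(f (2 * j + 1) * f (2 * j + 2))) : ℤ) : ℂ)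
      = -((f (2 * j + 1) : ℂ) * (f (2 * j + 2) : ℂ)) * (s : ℂ) := by push_cast; ring
  have E : ∀ i : Fin 2,
      ((s * (-(f (2 * j + 1) * f (2 * j + 2)))) • hWord f d (j + 1) i 0
        = C (-((f (2 * j + 1) : ℂ) * (f (2 * j + 2) : ℂ)))
          * ((s • hWord f d j i 0) * (C (d ^ (f (2 * j + 1)) * d ^ (f (2 * j + 2)))
              - C ((f (2 * j + 1) : ℂ) * (f (2 * j + 2) : ℂ)) * X)
            + (s • hWord f d j i 1)
              * (-(C ((f (2 * j + 2) : ℂ) * d ^ (-f (2 * j + 1))) * X)))) ∧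
      ((s * (-(f (2 * j + 1) * f (2 * j + 2)))) • hWord f d (j + 1) i 1
        = C (-((f (2 * j + 1) : ℂ) * (f (2 * j + 2) : ℂ)))
          * ((s • hWord f d j i 0) * C ((f (2 * j + 1) : ℂ) * d ^ (-f (2 * j + 2)))
            + (s • hWord f d j i 1)
              * C (d ^ (-f (2 * j + 1)) * d ^ (-f (2 * j + 2))))) := by
    intro i
    constructor <;>
    · rw [hM, mul_entry]
      simp only [entry00, entry01, entry10, entry11]
      rw [zsmul_poly, zsmul_poly, zsmul_poly, hs', C_mul]
      ring
  have hco : (f 1 : ℂ) * (f (2 * j) : ℂ) * d ^ (-f 1 - f (2 * j))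
      = ((f 1 : ℂ) * d ^ (-f 1)) * ((f (2 * j) : ℂ) * d ^ (-f (2 * j))) := by
    rw [sub_eq_add_neg, zpow_add₀ hd]; ring
  rw [hco] at h11
  have R0 := row_step hj he hnn (d ^ (-f (2 * j + 2))) (d ^ (-f (2 * j + 1)))
    (d ^ (f (2 * j + 1)) * d ^ (f (2 * j + 2)))
    ((f (2 * j) : ℂ) * d ^ (-f (2 * j))) 1 A
    (s • hWord f d j 0 0) (s • hWord f d j 0 1) (by simpa using h00) (by simpa using h01)
  have R1 := row_step hj he hnn (d ^ (-f (2 * j + 2))) (d ^ (-f (2 * j + 1)))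
    (d ^ (f (2 * j + 1)) * d ^ (f (2 * j + 2)))
    ((f (2 * j) : ℂ) * d ^ (-f (2 * j))) ((f 1 : ℂ) * d ^ (-f 1)) B
    (s • hWord f d j 1 0) (s • hWord f d j 1 1) h10 h11
  have hidx : 2 * (j + 1) = 2 * j + 2 := by ring
  refine ⟨?_, ?_, ?_, ?_⟩
  · simp only [Nat.add_sub_cancel]
    rw [(E 0).1]
    simpa using R0.1
  · simp only [Nat.add_sub_cancel, hidx]
    rw [(E 0).2]
    simpa using R0.2
  · simp only [Nat.add_sub_cancel]
    rw [(E 1).1]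
    simpa using R1.1
  · simp only [Nat.add_sub_cancel, hidx]
    rw [(E 1).2]
    have hco2 : (f 1 : ℂ) * (f (2 * j + 2) : ℂ) * d ^ (-f 1 - f (2 * j + 2))
        = ((f 1 : ℂ) * d ^ (-f 1)) * ((f (2 * j + 2) : ℂ) * d ^ (-f (2 * j + 2))) := by
      rw [sub_eq_add_neg, zpow_add₀ hd]; ring
    rw [hco2]
    simpa using R1.2

theorem stmt_9 (n : ℕ) (hn : 1 ≤ n) (f : ℕ → ℤ)
    (hf : ∀ i, 1 ≤ i → i ≤ 2 * n → f i = 1 ∨ f i = -1)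
    (d : ℂ) (hd : d ≠ 0) :
    ∃ (s : ℕ → ℤ) (A B : ℕ → ℂ), ∀ j, 1 ≤ j → j ≤ n →
      (s j = 1 ∨ s j = -1) ∧
      (s j • hWord f d j 0 0 - (X ^ j + C (A j) * X ^ (j - 1))).degree
        < ((j - 1 : ℕ) : WithBot ℕ) ∧
      (s j • hWord f d j 0 1
          + C ((f (2 * j) : ℂ) * d ^ (-f (2 * j))) * X ^ (j - 1)).degree
        < ((j - 1 : ℕ) : WithBot ℕ) ∧
      (s j • hWord f d j 1 0
          - C ((f 1 : ℂ) * d ^ (-f 1)) * (X ^ j + C (B j) * X ^ (j - 1))).degree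
        < ((j - 1 : ℕ) : WithBot ℕ) ∧
      (s j • hWord f d j 1 1
          + C ((f 1 : ℂ) * (f (2 * j) : ℂ) * d ^ (-f 1 - f (2 * j))) * X ^ (j - 1)).degree
        < ((j - 1 : ℕ) : WithBot ℕ) ∧
      A j - B j = A 1 - B 1 := by
  have hf1 : f 1 = 1 ∨ f 1 = -1 := hf 1 (by omega) (by omega)
  have key : ∀ j, 1 ≤ j → j ≤ n → ∃ s : ℤ, ∃ A B : ℂ, (s = 1 ∨ s = -1) ∧
      ((s • hWord f d j 0 0 - (X ^ j + C A * X ^ (j - 1))).degree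
        < ((j - 1 : ℕ) : WithBot ℕ)) ∧
      ((s • hWord f d j 0 1
          + C ((f (2 * j) : ℂ) * d ^ (-f (2 * j))) * X ^ (j - 1)).degree
        < ((j - 1 : ℕ) : WithBot ℕ)) ∧
      ((s • hWord f d j 1 0
          - C ((f 1 : ℂ) * d ^ (-f 1)) * (X ^ j + C B * X ^ (j - 1))).degree
        < ((j - 1 : ℕ) : WithBot ℕ)) ∧
      ((s • hWord f d j 1 1
          + C ((f 1 : ℂ) * (f (2 * j) : ℂ) * d ^ (-f 1 - f (2 * j))) * X ^ (j - 1)).degree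
        < ((j - 1 : ℕ) : WithBot ℕ)) ∧
      A - B = -((f 1 : ℂ) * (f 2 : ℂ)) * (d ^ (f 1) * d ^ (f 2)) := by
    intro j hj
    induction j, hj using Nat.le_induction with
    | base =>
      intro _
      have hf2 : f 2 = 1 ∨ f 2 = -1 := hf 2 (by omega) (by omega)
      obtain ⟨c1, c2, c3, c4⟩ := base_case hd hf1 hf2
      refine ⟨-(f 1 * f 2), -((f 1 : ℂ) * (f 2 : ℂ)) * (d ^ (f 1) * d ^ (f 2)), 0,
        ?_, c1, c2, c3, c4, by ring⟩
      rcases hf1 with h1 | h1 <;> rcases hf2 with h2 | h2 <;> rw [h1, h2] <;> norm_num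
    | succ j hj IH =>
      intro hjn
      obtain ⟨s, A, B, hs, c1, c2, c3, c4, hAB⟩ := IH (by omega)
      have hε := hf (2 * j + 1) (by omega) (by omega)
      have hη := hf (2 * j + 2) (by omega) (by omega)
      obtain ⟨d1, d2, d3, d4⟩ := step_case hd hj hε hη c1 c2 c3 c4
      refine ⟨s * (-(f (2 * j + 1) * f (2 * j + 2))),
        A - (f (2 * j + 1) : ℂ) * (f (2 * j + 2) : ℂ)
            * (d ^ (f (2 * j + 1)) * d ^ (f (2 * j + 2)))
          - (f (2 * j + 1) : ℂ) * ((f (2 * j) : ℂ) * d ^ (-f (2 * j)))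
            * d ^ (-f (2 * j + 1)),
        B - (f (2 * j + 1) : ℂ) * (f (2 * j + 2) : ℂ)
            * (d ^ (f (2 * j + 1)) * d ^ (f (2 * j + 2)))
          - (f (2 * j + 1) : ℂ) * ((f (2 * j) : ℂ) * d ^ (-f (2 * j)))
            * d ^ (-f (2 * j + 1)),
        ?_, d1, d2, d3, d4, by rw [← hAB]; ring⟩
      rcases hs with rfl | rfl <;> rcases hε with h1 | h1 <;> rcases hη with h2 | h2 <;>
        rw [h1, h2] <;> norm_num
  refine ⟨fun j => if h : 1 ≤ j ∧ j ≤ n then (key j h.1 h.2).choose else 1,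
    fun j => if h : 1 ≤ j ∧ j ≤ n then (key j h.1 h.2).choose_spec.choose else 0,
    fun j => if h : 1 ≤ j ∧ j ≤ n then
      (key j h.1 h.2).choose_spec.choose_spec.choose else 0, ?_⟩
  intro j h1 h2
  have hj : 1 ≤ j ∧ j ≤ n := ⟨h1, h2⟩
  have h1n : (1 : ℕ) ≤ 1 ∧ 1 ≤ n := ⟨le_rfl, hn⟩
  simp only [dif_pos hj, dif_pos h1n]
  obtain ⟨hs, c1, c2, c3, c4, hAB⟩ :=
    (key j hj.1 hj.2).choose_spec.choose_spec.choose_spec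
  obtain ⟨-, -, -, -, -, hAB1⟩ :=
    (key 1 h1n.1 h1n.2).choose_spec.choose_spec.choose_spec
  exact ⟨hs, c1, c2, c3, c4, by rw [hAB, hAB1]⟩
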